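/- The polynomial α_4(s) = (35/16)s⁴ − (35/8)s³ + (7/2)s² − (13/8)s + 5/16 factors as α_4(s) = (1/16)(s − 1)(35s³ − 35s² + 21s − 5), and every complex root z of 35s³ − 35s² + 21s − 5 satisfies |z| < 1. Consequently, 1 is a simple root of α_4 and all other roots lie strictly inside the unit circle, so the 4-step LIL method satisfies the Dahlquist root condition (zero-stability). -/

import Mathlib

open Polynomial

/-- First characteristic polynomial of the 4-step LIL method, over `ℂ`. -/
noncomputable def lilAlpha4 : Polynomial ℂ :=
  C (35 / 16) * X ^ 4 - C (35 / 8) * X ^ 3 + C (7 / 2) * X ^ 2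
    - C (13 / 8) * X + C (5 / 16)

/-- The auxiliary cubic has a real root in `[0.39, 0.41]`. -/
lemma lil_cubic_real_root : ∃ r : ℝ, 0.39 ≤ r ∧ r ≤ 0.41 ∧ 35*r^3 - 35*r^2 + 21*r - 5 = 0 := by
  have hc : ContinuousOn (fun x : ℝ => 35*x^3 - 35*x^2 + 21*x - 5) (Set.Icc 0.39 0.41) := by
    fun_prop
  have h := intermediate_value_Icc (by norm_num : (0.39:ℝ) ≤ 0.41) hc
  have h0 : (0:ℝ) ∈ Set.Icc ((fun x : ℝ => 35*x^3 - 35*x^2 + 21*x - 5) 0.39)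
      ((fun x : ℝ => 35*x^3 - 35*x^2 + 21*x - 5) 0.41) := by
    constructor <;> norm_num
  obtain ⟨r, hr, hfr⟩ := h h0
  exact ⟨r, hr.1, hr.2, hfr⟩

/-- Every complex root of `35s³ − 35s² + 21s − 5` lies strictly inside the unit circle. -/
lemma lil_cubic_roots_lt_one :
    ∀ z : ℂ, 35 * z ^ 3 - 35 * z ^ 2 + 21 * z - 5 = 0 → ‖z‖ < 1 := by
  obtain ⟨r, hr1, hr2, hr⟩ := lil_cubic_real_root
  intro z hz
  have hRc : (35:ℂ) * (r:ℂ)^3 - 35 * (r:ℂ)^2 + 21 * (r:ℂ) - 5 = 0 := by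
    exact_mod_cast congrArg (Complex.ofReal) hr
  have key : (z - (r:ℂ)) * (z^2 + ((r:ℂ) - 1) * z + ((r:ℂ)^2 - (r:ℂ) + 3/5)) = 0 := by
    linear_combination (1/35 : ℂ) * hz - (1/35 : ℂ) * hRc
  rcases mul_eq_zero.mp key with h | hq
  · have hzr : z = (r:ℂ) := sub_eq_zero.mp h
    rw [hzr, Complex.norm_real, Real.norm_eq_abs, abs_of_nonneg (by linarith)]
    linarith
  · have hq' : (starRingEnd ℂ) z ^ 2 + ((r:ℂ) - 1) * (starRingEnd ℂ) z
        + ((r:ℂ)^2 - (r:ℂ) + 3/5) = 0 := by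
      have := congrArg (starRingEnd ℂ) hq
      simpa [map_add, map_mul, map_pow, map_sub, map_div₀, map_ofNat,
        Complex.conj_ofReal] using this
    by_cases hc : (starRingEnd ℂ) z = z
    · obtain ⟨x, hx⟩ := Complex.conj_eq_iff_real.mp hc
      subst hx
      have hxr : x^2 + (r - 1) * x + (r^2 - r + 3/5) = 0 := by
        have h0 : ((x^2 + (r - 1) * x + (r^2 - r + 3/5) : ℝ) : ℂ) = 0 := by
          push_cast; linear_combination hq
        exact_mod_cast h0
      nlinarith [sq_nonneg (x + (r-1)/2), sq_nonneg (r - 1/3)]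
    · have hdiff : (z - (starRingEnd ℂ) z) * (z + (starRingEnd ℂ) z + ((r:ℂ) - 1)) = 0 := by
        linear_combination hq - hq'
      have hsum : (starRingEnd ℂ) z = 1 - (r:ℂ) - z := by
        rcases mul_eq_zero.mp hdiff with h | h
        · exact absurd (sub_eq_zero.mp h).symm hc
        · linear_combination h
      have hprod : z * (starRingEnd ℂ) z = ((r:ℂ)^2 - (r:ℂ) + 3/5) := by
        rw [hsum]; linear_combination -hq
      have h1 : ((Complex.normSq z : ℝ) : ℂ) = ((r^2 - r + 3/5 : ℝ) : ℂ) := by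
        rw [← Complex.mul_conj, hprod]; push_cast; ring
      have h2 : Complex.normSq z = r^2 - r + 3/5 := by exact_mod_cast h1
      rw [← Complex.sq_norm] at h2
      nlinarith [norm_nonneg z, h2]

/-- The factorization of `α₄`. -/
lemma lil_factor :
    lilAlpha4 = C (1 / 16) * (X - C 1) * (C 35 * X ^ 3 - C 35 * X ^ 2 + C 21 * X - C 5) := by
  unfold lilAlpha4
  rw [show (35/16 : ℂ) = 35 * (1/16) by norm_num, show (35/8 : ℂ) = 70 * (1/16) by norm_num,
    show (7/2 : ℂ) = 56 * (1/16) by norm_num, show (13/8 : ℂ) = 26 * (1/16) by norm_num,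
    show (5/16 : ℂ) = 5 * (1/16) by norm_num]
  simp only [C_mul, map_ofNat, C_1]
  ring

/-- `α₄(s)` factors as `(1/16)(s − 1)(35s³ − 35s² + 21s − 5)`, every complex root
`z` of `35s³ − 35s² + 21s − 5` satisfies `|z| < 1`, `1` is a simple root of `α₄`,
and all other roots lie strictly inside the unit circle: the 4-step LIL method
satisfies the Dahlquist root condition (zero-stability). -/
theorem lil_root_condition_m4 :
    lilAlpha4 = C (1 / 16) * (X - C 1) * (C 35 * X ^ 3 - C 35 * X ^ 2 + C 21 * X - C 5) ∧
    (∀ z : ℂ, 35 * z ^ 3 - 35 * z ^ 2 + 21 * z - 5 = 0 → ‖z‖ < 1) ∧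
    lilAlpha4.rootMultiplicity 1 = 1 ∧
    (∀ z : ℂ, lilAlpha4.eval z = 0 → z ≠ 1 → ‖z‖ < 1) := by
  refine ⟨lil_factor, lil_cubic_roots_lt_one, ?_, ?_⟩
  · rw [lil_factor]
    have hq : (C 35 * X ^ 3 - C 35 * X ^ 2 + C 21 * X - C 5 : ℂ[X]).eval 1 ≠ 0 := by
      simp; norm_num
    have hne : (C (1/16 : ℂ) * (X - C 1) * (C 35 * X ^ 3 - C 35 * X ^ 2 + C 21 * X - C 5)) ≠ 0 := by
      intro h
      have := congrArg (eval 0) h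
      simp [eval_mul] at this
    have h1 : (C (1/16 : ℂ) * (X - C 1)) ≠ 0 := fun h => hne (by rw [h, zero_mul])
    rw [rootMultiplicity_mul hne, rootMultiplicity_mul h1]
    rw [rootMultiplicity_eq_zero (by simp [IsRoot] : ¬IsRoot (C (1/16 : ℂ)) 1),
      rootMultiplicity_eq_zero (fun h => hq h), rootMultiplicity_X_sub_C_self]
  · intro z hz hz1
    rw [lil_factor] at hz
    simp only [eval_mul, eval_sub, eval_add, eval_pow, eval_X, eval_C, eval_one] at hz
    rcases mul_eq_zero.mp hz with h | h
    · rcases mul_eq_zero.mp h with h' | h'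
      · norm_num at h'
      · exact absurd (sub_eq_zero.mp h') hz1
    · exact lil_cubic_roots_lt_one z (by linear_combination h)
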